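/- Let a_1, ..., a_m ∈ ℝ^n be unit vectors with pairwise incoherence |⟨a_i, a_j⟩| ≤ μ for all i ≠ j. Let B be the m×n³ matrix whose i-th row is the flattening of a_i^{⊗3}. Then ‖B Bᵀ‖ ≤ 1 + m·μ³, and hence ‖B‖² ≤ 1 + m·μ³. -/

import Mathlib

open scoped RealInnerProductSpace

open Matrix
open scoped Matrix.Norms.L2Operator

lemma schur_test {ι : Type*} [Fintype ι] [DecidableEq ι] (A : Matrix ι ι ℝ) (r : ℝ) (hr : 0 ≤ r)
    (hrow : ∀ i, ∑ j, |A i j| ≤ r) (hcol : ∀ j, ∑ i, |A i j| ≤ r) : ‖A‖ ≤ r := by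
  rw [Matrix.l2_opNorm_def]
  refine ContinuousLinearMap.opNorm_le_bound _ hr fun x => ?_
  simp only [LinearEquiv.trans_apply, LinearMap.coe_toContinuousLinearMap']
  have hkey : ‖toEuclideanLin A x‖^2 ≤ (r * ‖x‖)^2 := by
    rw [EuclideanSpace.norm_eq, Real.sq_sqrt (by positivity)]
    have hterm : ∀ i, ‖(toEuclideanLin A x) i‖^2 ≤ r * ∑ j, |A i j| * (x j)^2 := by
      intro i
      have h1 : (toEuclideanLin A x) i = ∑ j, A i j * x j := by
        simp [Matrix.toEuclideanLin_apply, Matrix.mulVec, dotProduct]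
      rw [h1, Real.norm_eq_abs, sq_abs]
      have h2 : (∑ j, A i j * x j)^2 ≤ (∑ j, |A i j|) * (∑ j, |A i j| * (x j)^2) := by
        refine Finset.sum_sq_le_sum_mul_sum_of_sq_eq_mul Finset.univ
          (fun j _ => abs_nonneg _) (fun j _ => by positivity) (fun j _ => ?_)
        rw [mul_pow, ← mul_assoc, ← abs_mul, abs_mul_self, sq]
      calc (∑ j, A i j * x j)^2 ≤ (∑ j, |A i j|) * (∑ j, |A i j| * (x j)^2) := h2
        _ ≤ r * ∑ j, |A i j| * (x j)^2 :=
            mul_le_mul_of_nonneg_right (hrow i) (by positivity)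
    calc ∑ i, ‖(toEuclideanLin A x) i‖^2 ≤ ∑ i, r * ∑ j, |A i j| * (x j)^2 :=
          Finset.sum_le_sum fun i _ => hterm i
      _ = r * ∑ j, (∑ i, |A i j|) * (x j)^2 := by
          rw [← Finset.mul_sum, Finset.sum_comm]
          congr 1; refine Finset.sum_congr rfl fun j _ => ?_; rw [Finset.sum_mul]
      _ ≤ r * ∑ j, r * (x j)^2 := by
          refine mul_le_mul_of_nonneg_left (Finset.sum_le_sum fun j _ => ?_) hr
          exact mul_le_mul_of_nonneg_right (hcol j) (sq_nonneg _)
      _ = (r * ‖x‖)^2 := by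
          rw [← Finset.mul_sum, mul_pow, EuclideanSpace.norm_eq,
            Real.sq_sqrt (by positivity)]
          simp [Real.norm_eq_abs, sq_abs]; ring
  have h := Real.sqrt_le_sqrt hkey
  rwa [Real.sqrt_sq (norm_nonneg _), Real.sqrt_sq (by positivity)] at h


theorem tensor_gram_norm_bound (m n : ℕ) (μ : ℝ) (hμ : 0 ≤ μ)
    (a : Fin m → EuclideanSpace ℝ (Fin n))
    (ha : ∀ i, ‖a i‖ = 1)
    (hinc : ∀ i j, i ≠ j → |⟪a i, a j⟫| ≤ μ)
    (B : Matrix (Fin m) (Fin n × Fin n × Fin n) ℝ)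
    (hB : ∀ i p, B i p = a i p.1 * a i p.2.1 * a i p.2.2) :
    ‖B * Bᵀ‖ ≤ 1 + m * μ^3 ∧ ‖B‖^2 ≤ 1 + m * μ^3 := by
  have hentry : ∀ i j, (B * Bᵀ) i j = ⟪a i, a j⟫ ^ 3 := by
    intro i j
    have hin : ⟪a i, a j⟫ = ∑ k, a i k * a j k := by
      simp [PiLp.inner_apply, RCLike.inner_apply, mul_comm]
    rw [Matrix.mul_apply, hin]
    simp only [Matrix.transpose_apply, hB, Fintype.sum_prod_type]
    have hfac : ∀ (k1 k2 k3 : Fin n),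
        a i k1 * a i k2 * a i k3 * (a j k1 * a j k2 * a j k3) =
        (a i k1 * a j k1) * ((a i k2 * a j k2) * (a i k3 * a j k3)) := fun _ _ _ => by ring
    simp_rw [hfac, ← Finset.mul_sum, ← Finset.sum_mul]
    ring
  have hdiag : ∀ i, (B * Bᵀ) i i = 1 := by
    intro i
    rw [hentry, real_inner_self_eq_norm_sq, ha]
    norm_num
  have hoff : ∀ i j, i ≠ j → |(B * Bᵀ) i j| ≤ μ ^ 3 := by
    intro i j hij
    rw [hentry, abs_pow]
    exact pow_le_pow_left₀ (abs_nonneg _) (hinc i j hij) 3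
  have hsum : ∀ i, ∑ j, |(B * Bᵀ) i j| ≤ 1 + m * μ ^ 3 := by
    intro i
    rw [← Finset.add_sum_erase _ _ (Finset.mem_univ i), hdiag, abs_one]
    have hb : ∑ j ∈ Finset.univ.erase i, |(B * Bᵀ) i j| ≤ m * μ ^ 3 := by
      calc ∑ j ∈ Finset.univ.erase i, |(B * Bᵀ) i j|
          ≤ ∑ _j ∈ Finset.univ.erase i, μ ^ 3 :=
            Finset.sum_le_sum fun j hj => hoff i j (Finset.ne_of_mem_erase hj).symm
        _ = (Finset.univ.erase i).card * μ ^ 3 := by rw [Finset.sum_const, nsmul_eq_mul]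
        _ ≤ m * μ ^ 3 := by
            have hc : ((Finset.univ.erase i).card : ℝ) ≤ m := by
              rw [Finset.card_erase_of_mem (Finset.mem_univ i)]
              simp only [Finset.card_univ, Fintype.card_fin]
              exact_mod_cast Nat.sub_le m 1
            exact mul_le_mul_of_nonneg_right hc (by positivity)
    linarith
  have hsym : (B * Bᵀ)ᵀ = B * Bᵀ := by
    rw [Matrix.transpose_mul, Matrix.transpose_transpose]
  have h1 : ‖B * Bᵀ‖ ≤ 1 + m * μ ^ 3 := by
    refine schur_test _ _ (by positivity) hsum fun j => ?_
    calc ∑ i, |(B * Bᵀ) i j| = ∑ i, |(B * Bᵀ) j i| := by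
          refine Finset.sum_congr rfl fun i _ => ?_
          conv_lhs => rw [← hsym]
          rfl
      _ ≤ 1 + m * μ ^ 3 := hsum j
  refine ⟨h1, ?_⟩
  have hconj : Bᵀ = Bᴴ := by
    ext i j; simp [Matrix.conjTranspose_apply]
  have h2 := Matrix.l2_opNorm_conjTranspose_mul_self Bᴴ
  rw [Matrix.conjTranspose_conjTranspose, Matrix.l2_opNorm_conjTranspose] at h2
  rw [sq, ← h2, ← hconj]
  exact h1
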